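/- Let C₁ be a channel from a finite set X₁ to a finite set Y₁ of traces and C₂ a channel from a finite set X₂ to a finite set Y₂ of traces. Assume the traces of Y₁ and Y₂ share no actions: for all y₁ ∈ Y₁, y₂ ∈ Y₂ and all actions α occurring in y₁ and β occurring in y₂, α ≠ β. Then for every prior π on X₁×X₂ and every scheduler S on Y₁, Y₂, both the mutual information and the min-entropy leakage of the scheduled composition equal those of the parallel composition: I(π, Comp_S(C₁,C₂)) = I(π, C₁×C₂) and L(π, Comp_S(C₁,C₂)) = L(π, C₁×C₂). -/

import Mathlib

open scoped Classical BigOperators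

noncomputable section

/-- A (row-stochastic) channel matrix whose outputs range over a finite set `Ys`. -/
def FIsChannel {X B : Type*} (Ys : Finset B) (C : X → B → ℝ) : Prop :=
  (∀ x y, 0 ≤ C x y) ∧ ∀ x, ∑ y ∈ Ys, C x y = 1

/-- A prior (probability distribution). -/
def IsPrior {X : Type*} [Fintype X] (π : X → ℝ) : Prop :=
  (∀ x, 0 ≤ π x) ∧ ∑ x, π x = 1

/-- Cascade composition of channels (matrix product), outputs of the first ranging
over the finite set `Ys`. -/
def Fcascade {X B Z : Type*} (Ys : Finset B) (C : X → B → ℝ) (D : B → Z → ℝ) :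
    X → Z → ℝ :=
  fun x z => ∑ y ∈ Ys, C x y * D y z

/-- Mutual information (base-2), with `0`-probability terms taken to be `0`. -/
def FMI {X B : Type*} [Fintype X] (π : X → ℝ) (Ys : Finset B) (C : X → B → ℝ) : ℝ :=
  ∑ x, ∑ y ∈ Ys, if π x * C x y = 0 then 0
    else π x * C x y * Real.logb 2 (C x y / ∑ x', π x' * C x' y)

/-- Prior vulnerability. -/
def Vprior {X : Type*} [Fintype X] [Nonempty X] (π : X → ℝ) : ℝ :=
  Finset.univ.sup' Finset.univ_nonempty π

/-- Posterior vulnerability. -/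
def FVpost {X B : Type*} [Fintype X] [Nonempty X]
    (π : X → ℝ) (Ys : Finset B) (C : X → B → ℝ) : ℝ :=
  ∑ y ∈ Ys, Finset.univ.sup' Finset.univ_nonempty (fun x => π x * C x y)

/-- Min-entropy leakage. -/
def FMEL {X B : Type*} [Fintype X] [Nonempty X]
    (π : X → ℝ) (Ys : Finset B) (C : X → B → ℝ) : ℝ :=
  Real.logb 2 (FVpost π Ys C) - Real.logb 2 (Vprior π)

/-- Min-capacity: supremum of min-entropy leakage over all priors. -/
def FMinCap {X B : Type*} [Fintype X] [Nonempty X] (Ys : Finset B) (C : X → B → ℝ) : ℝ :=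
  sSup {l : ℝ | ∃ π : X → ℝ, IsPrior π ∧ l = FMEL π Ys C}

/-- All interleavings (shuffles) of two traces. -/
def interleavings {A : Type*} : List A → List A → List (List A)
  | [], ys => [ys]
  | x :: xs, [] => [x :: xs]
  | x :: xs, y :: ys =>
      ((interleavings xs (y :: ys)).map (x :: ·)) ++
        ((interleavings (x :: xs) ys).map (y :: ·))
termination_by l₁ l₂ => l₁.length + l₂.length

/-- The interleaving `Int(y₁, y₂)` of two traces, as a finite set. -/
def IntF {A : Type*} [DecidableEq A] (y₁ y₂ : List A) : Finset (List A) :=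
  (interleavings y₁ y₂).toFinset

/-- The interleaving `Int(Y₁, Y₂)` of two finite sets of traces. -/
def IntSet {A : Type*} [DecidableEq A] (Y₁ Y₂ : Finset (List A)) : Finset (List A) :=
  Y₁.biUnion fun y₁ => Y₂.biUnion fun y₂ => IntF y₁ y₂

/-- A scheduler on `Y₁`, `Y₂`: for each pair of traces it yields a probability
distribution supported on their interleavings. -/
def IsScheduler {A : Type*} [DecidableEq A] (Y₁ Y₂ : Finset (List A))
    (S : List A → List A → List A → ℝ) : Prop :=
  ∀ y₁ ∈ Y₁, ∀ y₂ ∈ Y₂,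
    (∀ y, 0 ≤ S y₁ y₂ y) ∧ (∀ y, y ∉ IntF y₁ y₂ → S y₁ y₂ y = 0) ∧
      ∑ y ∈ IntF y₁ y₂, S y₁ y₂ y = 1

/-- The scheduled composition of two channels with respect to a scheduler. -/
def Comp {A X₁ X₂ : Type*} (Y₁ Y₂ : Finset (List A))
    (C₁ : X₁ → List A → ℝ) (C₂ : X₂ → List A → ℝ)
    (S : List A → List A → List A → ℝ) : X₁ × X₂ → List A → ℝ :=
  fun x y => ∑ y₁ ∈ Y₁, ∑ y₂ ∈ Y₂, C₁ x.1 y₁ * C₂ x.2 y₂ * S y₁ y₂ y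

/-- The (disjoint) parallel composition of two channels. -/
def Par {A X₁ X₂ : Type*} (C₁ : X₁ → List A → ℝ) (C₂ : X₂ → List A → ℝ) :
    X₁ × X₂ → List A × List A → ℝ :=
  fun x y => C₁ x.1 y.1 * C₂ x.2 y.2


lemma interleavings_filter {A : Type*} (p : A → Bool) :
    ∀ (l₁ l₂ : List A), ∀ y ∈ interleavings l₁ l₂,
      (∀ a ∈ l₁, p a = true) → (∀ a ∈ l₂, p a = false) →
      y.filter p = l₁ ∧ y.filter (fun a => !p a) = l₂ := by
  intro l₁ l₂
  induction l₁, l₂ using interleavings.induct with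
  | case1 ys =>
    intro y hy h1 h2
    simp [interleavings] at hy
    subst hy
    constructor
    · rw [List.filter_eq_nil_iff]; intro a ha; simp [h2 a ha]
    · rw [List.filter_eq_self]; intro a ha; simp [h2 a ha]
  | case2 x xs =>
    intro y hy h1 h2
    simp [interleavings] at hy
    subst hy
    constructor
    · rw [List.filter_eq_self]; exact h1
    · rw [List.filter_eq_nil_iff]; intro a ha; simp [h1 a ha]
  | case3 x xs b bs ih1 ih2 =>
    intro y hy h1 h2
    rw [interleavings] at hy
    simp only [List.mem_append, List.mem_map] at hy
    rcases hy with ⟨z, hz, rfl⟩ | ⟨z, hz, rfl⟩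
    · have := ih1 z hz (fun a ha => h1 a (List.mem_cons_of_mem _ ha)) h2
      simp [List.filter_cons, h1 x List.mem_cons_self, this.1, this.2]
    · have := ih2 z hz h1 (fun a ha => h2 a (List.mem_cons_of_mem _ ha))
      simp [List.filter_cons, h2 b List.mem_cons_self, this.1, this.2]

/-- if the traces of the two component channels share no actions,
then scheduled composition has the same mutual information and min-entropy
leakage as parallel composition, for every scheduler. -/
theorem scheduled_eq_parallel_of_no_shared_actions
    {A X₁ X₂ : Type*} [DecidableEq A] [Fintype X₁] [Fintype X₂]
    [Nonempty X₁] [Nonempty X₂]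
    (Y₁ Y₂ : Finset (List A))
    (C₁ : X₁ → List A → ℝ) (C₂ : X₂ → List A → ℝ)
    (hC₁ : FIsChannel Y₁ C₁) (hC₂ : FIsChannel Y₂ C₂)
    (hact : ∀ y₁ ∈ Y₁, ∀ y₂ ∈ Y₂, ∀ α ∈ y₁, ∀ β ∈ y₂, α ≠ β)
    (π : X₁ × X₂ → ℝ) (hπ : IsPrior π)
    (S : List A → List A → List A → ℝ) (hS : IsScheduler Y₁ Y₂ S) :
    FMI π (IntSet Y₁ Y₂) (Comp Y₁ Y₂ C₁ C₂ S) = FMI π (Y₁ ×ˢ Y₂) (Par C₁ C₂) ∧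
      FMEL π (IntSet Y₁ Y₂) (Comp Y₁ Y₂ C₁ C₂ S) = FMEL π (Y₁ ×ˢ Y₂) (Par C₁ C₂) := by
  classical
  set CS := Comp Y₁ Y₂ C₁ C₂ S with hCS
  set p : A → Bool := fun a => decide (∃ y₁ ∈ Y₁, a ∈ y₁) with hp
  have hE : ∀ y₁ ∈ Y₁, ∀ y₂ ∈ Y₂, ∀ y ∈ IntF y₁ y₂,
      y.filter p = y₁ ∧ y.filter (fun a => !p a) = y₂ := by
    intro y₁ h₁ y₂ h₂ y hy
    rw [IntF, List.mem_toFinset] at hy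
    refine interleavings_filter p y₁ y₂ y hy ?_ ?_
    · intro a ha; simp only [hp, decide_eq_true_eq]; exact ⟨y₁, h₁, ha⟩
    · intro a ha
      simp only [hp, decide_eq_false_iff_not]
      rintro ⟨z, hz, haz⟩
      exact hact z hz y₂ h₂ a haz a ha rfl
  have huniq : ∀ q ∈ Y₁ ×ˢ Y₂, ∀ q' ∈ Y₁ ×ˢ Y₂, ∀ y, y ∈ IntF q.1 q.2 →
      y ∈ IntF q'.1 q'.2 → q = q' := by
    intro q hq q' hq' y hy hy'
    rw [Finset.mem_product] at hq hq'
    have e1 := hE q.1 hq.1 q.2 hq.2 y hy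
    have e2 := hE q'.1 hq'.1 q'.2 hq'.2 y hy'
    exact Prod.ext (by rw [← e1.1, e2.1]) (by rw [← e1.2, e2.2])
  have hdisj : (↑(Y₁ ×ˢ Y₂) : Set (List A × List A)).PairwiseDisjoint
      (fun q => IntF q.1 q.2) := by
    intro q hq q' hq' hne
    simp only [Function.onFun]
    rw [Finset.disjoint_left]
    intro y hy hy'
    exact hne (huniq q (by exact_mod_cast hq) q' (by exact_mod_cast hq') y hy hy')
  have hIntSet : IntSet Y₁ Y₂ = (Y₁ ×ˢ Y₂).biUnion fun q => IntF q.1 q.2 := by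
    ext y
    simp only [IntSet, Finset.mem_biUnion, Finset.mem_product, Prod.exists]
    constructor
    · rintro ⟨y₁, h₁, y₂, h₂, hy⟩; exact ⟨y₁, y₂, ⟨h₁, h₂⟩, hy⟩
    · rintro ⟨y₁, y₂, ⟨h₁, h₂⟩, hy⟩; exact ⟨y₁, h₁, y₂, h₂, hy⟩
  have hS0 : ∀ q ∈ Y₁ ×ˢ Y₂, ∀ y, 0 ≤ S q.1 q.2 y := fun q hq y => by
    rw [Finset.mem_product] at hq; exact (hS q.1 hq.1 q.2 hq.2).1 y
  have hSsum : ∀ q ∈ Y₁ ×ˢ Y₂, ∑ y ∈ IntF q.1 q.2, S q.1 q.2 y = 1 := fun q hq => by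
    rw [Finset.mem_product] at hq; exact (hS q.1 hq.1 q.2 hq.2).2.2
  have hComp : ∀ (x : X₁ × X₂), ∀ q ∈ Y₁ ×ˢ Y₂, ∀ y ∈ IntF q.1 q.2,
      CS x y = Par C₁ C₂ x q * S q.1 q.2 y := by
    intro x q hq y hy
    rw [hCS, Comp, ← Finset.sum_product']
    rw [Finset.sum_eq_single_of_mem q hq]
    · rfl
    · intro q' hq' hne
      rw [Finset.mem_product] at hq'
      have hnot : y ∉ IntF q'.1 q'.2 := fun hy' =>
        hne (huniq q' (Finset.mem_product.2 hq') q hq y hy' hy)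
      rw [(hS q'.1 hq'.1 q'.2 hq'.2).2.1 y hnot, mul_zero]
  have hV : FVpost π (IntSet Y₁ Y₂) CS = FVpost π (Y₁ ×ˢ Y₂) (Par C₁ C₂) := by
    unfold FVpost
    rw [hIntSet, Finset.sum_biUnion hdisj]
    refine Finset.sum_congr rfl fun q hq => ?_
    have key : ∀ y ∈ IntF q.1 q.2,
        Finset.univ.sup' Finset.univ_nonempty (fun x => π x * CS x y)
          = Finset.univ.sup' Finset.univ_nonempty (fun x => π x * Par C₁ C₂ x q)
            * S q.1 q.2 y := by
      intro y hy
      have hg : ∀ a b : ℝ, (a ⊔ b) * S q.1 q.2 y = a * S q.1 q.2 y ⊔ b * S q.1 q.2 y :=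
        fun a b => max_mul_of_nonneg a b (hS0 q hq y)
      have h1 := Finset.comp_sup'_eq_sup'_comp (f := fun x => π x * Par C₁ C₂ x q)
        Finset.univ_nonempty (fun t => t * S q.1 q.2 y) hg
      have hfun : (fun x : X₁ × X₂ => π x * CS x y)
          = fun x => π x * Par C₁ C₂ x q * S q.1 q.2 y := by
        funext x; rw [hComp x q hq y hy, mul_assoc]
      rw [hfun]
      exact h1.symm
    rw [Finset.sum_congr rfl key, ← Finset.mul_sum, hSsum q hq, mul_one]
  have hMI : FMI π (IntSet Y₁ Y₂) CS = FMI π (Y₁ ×ˢ Y₂) (Par C₁ C₂) := by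
    unfold FMI
    refine Finset.sum_congr rfl fun x _ => ?_
    rw [hIntSet, Finset.sum_biUnion hdisj]
    refine Finset.sum_congr rfl fun q hq => ?_
    have key : ∀ y ∈ IntF q.1 q.2,
        (if π x * CS x y = 0 then 0
          else π x * CS x y * Real.logb 2 (CS x y / ∑ x', π x' * CS x' y))
        = S q.1 q.2 y * (if π x * Par C₁ C₂ x q = 0 then 0
          else π x * Par C₁ C₂ x q *
            Real.logb 2 (Par C₁ C₂ x q / ∑ x', π x' * Par C₁ C₂ x' q)) := by
      intro y hy
      have hden : (∑ x', π x' * CS x' y)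
          = (∑ x', π x' * Par C₁ C₂ x' q) * S q.1 q.2 y := by
        rw [Finset.sum_mul]
        refine Finset.sum_congr rfl fun x' _ => ?_
        rw [hComp x' q hq y hy, mul_assoc]
      rw [hComp x q hq y hy, hden]
      by_cases hSy : S q.1 q.2 y = 0
      · simp [hSy]
      · rw [mul_div_mul_right _ _ hSy]
        by_cases h0 : π x * Par C₁ C₂ x q = 0
        · have hz : π x * (Par C₁ C₂ x q * S q.1 q.2 y) = 0 := by
            rw [← mul_assoc, h0, zero_mul]
          rw [if_pos hz, if_pos h0, mul_zero]
        · rw [if_neg, if_neg h0]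
          · ring
          · intro hc
            rw [← mul_assoc, mul_eq_zero] at hc
            rcases hc with h | h
            exacts [h0 h, hSy h]
    rw [Finset.sum_congr rfl key, ← Finset.sum_mul, hSsum q hq, one_mul]
  refine ⟨hMI, ?_⟩
  unfold FMEL
  rw [hV]
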